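/- Under the assumptions on H, ℓ, s and u in the context: u(0) = 0 and u(ℓ) = 0; u(t) > 0 for every t ∈ (0, ℓ); and u(ℓ/2 − t) = u(ℓ/2 + t) for every t ∈ [0, ℓ/2]. -/
import Mathlib


open Set intervalIntegral

/-- **Properties a)–c) of Lemma 6.6 of the paper.** Under the stated assumptions on
the staircase `s` and with `u(t) = ∫₀ᵗ (s(r)−Hr)/√(1−(s(r)−Hr)²) dr`, one has
`u(0) = u(ℓ) = 0`, `u > 0` on `(0, ℓ)`, and `u` is symmetric about `ℓ/2`. -/
theorem cantor_profile_basic_properties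
    (H ℓ : ℝ) (hH : 0 < H) (hℓ : 0 < ℓ) (hHℓ : H * ℓ < 2)
    (s : ℝ → ℝ) (hscont : Continuous s) (hsmono : Monotone s)
    (hs0 : s 0 = 0) (hsℓ : s ℓ = H * ℓ)
    (hsym : ∀ t ∈ Set.Icc (0 : ℝ) ℓ, s t + s (ℓ - t) = H * ℓ)
    (hgt : ∀ t ∈ Set.Ioo (0 : ℝ) (ℓ / 2), H * t < s t)
    (hbd : ∀ t ∈ Set.Icc (0 : ℝ) ℓ, |s t - H * t| ≤ H * ℓ / 2)
    (u : ℝ → ℝ)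
    (hu : ∀ t, u t = ∫ r in (0 : ℝ)..t,
      (s r - H * r) / Real.sqrt (1 - (s r - H * r) ^ 2)) :
    u 0 = 0 ∧ u ℓ = 0 ∧
    (∀ t ∈ Set.Ioo (0 : ℝ) ℓ, 0 < u t) ∧
    (∀ t ∈ Set.Icc (0 : ℝ) (ℓ / 2), u (ℓ / 2 - t) = u (ℓ / 2 + t)) := by
  set f : ℝ → ℝ := fun r => (s r - H * r) / Real.sqrt (1 - (s r - H * r) ^ 2)
    with hf
  have hHl1 : H * ℓ / 2 < 1 := by linarith
  have hsq : ∀ r ∈ Icc (0 : ℝ) ℓ, (s r - H * r) ^ 2 < 1 := by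
    intro r hr
    have := hbd r hr
    have habs : |s r - H * r| < 1 := by linarith
    exact (sq_lt_one_iff_abs_lt_one _).mpr habs
  have hpos : ∀ r ∈ Icc (0 : ℝ) ℓ, 0 < Real.sqrt (1 - (s r - H * r) ^ 2) := by
    intro r hr
    exact Real.sqrt_pos.mpr (by linarith [hsq r hr])
  have hcont : ContinuousOn f (Icc 0 ℓ) := by
    apply ContinuousOn.div
    · exact (hscont.sub (continuous_const.mul continuous_id)).continuousOn
    · exact (Real.continuous_sqrt.comp
        (continuous_const.sub
          ((hscont.sub (continuous_const.mul continuous_id)).pow 2))).continuousOn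
    · intro r hr; exact (hpos r hr).ne'
  have hint : ∀ a b, a ∈ Icc (0:ℝ) ℓ → b ∈ Icc (0:ℝ) ℓ →
      IntervalIntegrable f MeasureTheory.volume a b := by
    intro a b ha hb
    apply (hcont.mono ?_).intervalIntegrable
    intro x hx
    rcases hx with hx
    constructor
    · exact le_trans (le_min ha.1 hb.1) (by simpa [uIcc] using hx.1)
    · exact le_trans (by simpa [uIcc] using hx.2) (max_le ha.2 hb.2)
  have hanti : ∀ r ∈ Icc (0:ℝ) ℓ, f (ℓ - r) = -f r := by
    intro r hr
    have hg : s (ℓ - r) - H * (ℓ - r) = -(s r - H * r) := by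
      linear_combination hsym r hr
    show (s (ℓ - r) - H * (ℓ - r)) / Real.sqrt (1 - (s (ℓ - r) - H * (ℓ - r)) ^ 2)
        = -((s r - H * r) / Real.sqrt (1 - (s r - H * r) ^ 2))
    rw [hg, neg_sq, neg_div]
  have hmem0 : (0:ℝ) ∈ Icc (0:ℝ) ℓ := ⟨le_refl _, hℓ.le⟩
  have hmeml : ℓ ∈ Icc (0:ℝ) ℓ := ⟨hℓ.le, le_refl _⟩
  -- u 0 = 0
  have hu0 : u 0 = 0 := by rw [hu]; simp
  -- u ℓ = 0
  have huℓ : u ℓ = 0 := by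
    have h1 : ∫ r in (0:ℝ)..ℓ, f (ℓ - r) = ∫ r in (0:ℝ)..ℓ, f r := by
      rw [intervalIntegral.integral_comp_sub_left f ℓ]
      norm_num
    have h2 : ∫ r in (0:ℝ)..ℓ, f (ℓ - r) = -∫ r in (0:ℝ)..ℓ, f r := by
      rw [← intervalIntegral.integral_neg]
      apply intervalIntegral.integral_congr
      intro x hx
      rw [uIcc_of_le hℓ.le] at hx
      exact hanti x hx
    have : ∫ r in (0:ℝ)..ℓ, f r = 0 := by linarith [h1, h2]
    rw [hu]; exact this
  -- symmetry
  have hsymu : ∀ t ∈ Icc (0:ℝ) (ℓ / 2), u (ℓ / 2 - t) = u (ℓ / 2 + t) := by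
    intro t ht
    set a := ℓ / 2 - t with ha
    set b := ℓ / 2 + t with hb
    have hab : a ≤ b := by simp [ha, hb]; linarith [ht.1]
    have hamem : a ∈ Icc (0:ℝ) ℓ := ⟨by simp [ha]; linarith [ht.2], by simp [ha]; linarith [ht.1]⟩
    have hbmem : b ∈ Icc (0:ℝ) ℓ := ⟨by simp [hb]; linarith [ht.1], by simp [hb]; linarith [ht.2]⟩
    have hI : ∫ r in a..b, f r = 0 := by
      have h1 : ∫ r in a..b, f (ℓ - r) = ∫ r in a..b, f r := by
        rw [intervalIntegral.integral_comp_sub_left f ℓ]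
        have e1 : ℓ - b = a := by simp [ha, hb]; ring
        have e2 : ℓ - a = b := by simp [ha, hb]; ring
        rw [e1, e2]
      have h2 : ∫ r in a..b, f (ℓ - r) = -∫ r in a..b, f r := by
        rw [← intervalIntegral.integral_neg]
        apply intervalIntegral.integral_congr
        intro x hx
        rw [uIcc_of_le hab] at hx
        exact hanti x ⟨le_trans hamem.1 hx.1, le_trans hx.2 hbmem.2⟩
      linarith [h1, h2]
    have hadd : (∫ r in (0:ℝ)..a, f r) + ∫ r in a..b, f r = ∫ r in (0:ℝ)..b, f r :=
      intervalIntegral.integral_add_adjacent_intervals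
        (hint 0 a hmem0 hamem) (hint a b hamem hbmem)
    rw [hu, hu]
    rw [← hadd, hI, add_zero]
  -- positivity on (0, ℓ/2]
  have hposu : ∀ t, 0 < t → t ≤ ℓ / 2 → 0 < u t := by
    intro t ht0 ht2
    have htmem : t ∈ Icc (0:ℝ) ℓ := ⟨ht0.le, by linarith⟩
    rw [hu]
    apply intervalIntegral.intervalIntegral_pos_of_pos_on (hint 0 t hmem0 htmem) _ ht0
    intro x hx
    have hx2 : x ∈ Ioo (0:ℝ) (ℓ / 2) := ⟨hx.1, lt_of_lt_of_le hx.2 ht2⟩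
    have hxI : x ∈ Icc (0:ℝ) ℓ := ⟨hx.1.le, by linarith [hx2.2]⟩
    exact div_pos (by linarith [hgt x hx2]) (hpos x hxI)
  refine ⟨hu0, huℓ, ?_, hsymu⟩
  intro t ht
  rcases le_or_gt t (ℓ / 2) with h | h
  · exact hposu t ht.1 h
  · have hx : t - ℓ / 2 ∈ Icc (0:ℝ) (ℓ / 2) := ⟨by linarith, by linarith [ht.2]⟩
    have := hsymu (t - ℓ / 2) hx
    have e1 : ℓ / 2 + (t - ℓ / 2) = t := by ring
    have e2 : ℓ / 2 - (t - ℓ / 2) = ℓ - t := by ring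
    rw [e1, e2] at this
    rw [← this]
    exact hposu (ℓ - t) (by linarith [ht.2]) (by linarith)
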